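/- Fix γ > 0, ω > 0 and λ > 0, and for r > γ define D(ω, r, λ) := (1/λ²)·(sinh(ωλ) + e^{−ωλ}·(1 − γ/r)·(1 − e^{ωλ} − (γ/r)·log((e^{ωλ}·r − γ)/(r − γ)))), with log the real logarithm. Then the limit of D(ω, r, λ) as r → γ from the right equals sinh(ωλ)/λ². -/

import Mathlib

open Filter

/-- The time part `D(ω,r)` of the noncommutative black-hole wave operator
acting on a Fourier mode `e^{iωt}` (Proposition 5.3 of the paper), with
deformation parameter `lam` (the Planck time). -/
noncomputable def Dfun (γ ω r lam : ℝ) : ℝ :=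
  (1 / lam ^ 2) *
    (Real.sinh (ω * lam) +
      Real.exp (-(ω * lam)) * (1 - γ / r) *
        (1 - Real.exp (ω * lam) -
          (γ / r) * Real.log ((Real.exp (ω * lam) * r - γ) / (r - γ))))

/- Third limit of Proposition 5.3: at the event horizon r → γ⁺ the coefficient
D(ω,r,λ) stays finite, equal to sinh(ωλ)/λ². -/

theorem Dfun_limit_at_horizon (γ ω lam : ℝ) (hγ : 0 < γ) (hω : 0 < ω)
    (hlam : 0 < lam) :
    Tendsto (fun r => Dfun γ ω r lam) (nhdsWithin γ (Set.Ioi γ))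
      (nhds (Real.sinh (ω * lam) / lam ^ 2)) := by
  set E := Real.exp (ω * lam) with hEdef
  have hE : 1 < E := Real.one_lt_exp_iff.mpr (by positivity)
  -- the auxiliary (decomposed) correction term
  set h : ℝ → ℝ := fun r =>
    (1 - γ / r) * (1 - E) - (γ / r) * (1 - γ / r) * Real.log (E * r - γ)
      + (γ / (r * r)) * (Real.log (r - γ) * (r - γ)) with hhdef
  -- limit of r ↦ (1 - γ/r) is 0
  have hA : Tendsto (fun r : ℝ => 1 - γ / r) (nhdsWithin γ (Set.Ioi γ)) (nhds 0) := by
    have : Tendsto (fun r : ℝ => 1 - γ / r) (nhds γ) (nhds (1 - γ / γ)) := by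
      apply Tendsto.sub tendsto_const_nhds
      exact Tendsto.div tendsto_const_nhds tendsto_id hγ.ne'
    rw [div_self hγ.ne', sub_self] at this
    exact this.mono_left nhdsWithin_le_nhds
  -- limit of r ↦ γ/r is 1
  have hB : Tendsto (fun r : ℝ => γ / r) (nhdsWithin γ (Set.Ioi γ)) (nhds 1) := by
    have : Tendsto (fun r : ℝ => γ / r) (nhds γ) (nhds (γ / γ)) :=
      Tendsto.div tendsto_const_nhds tendsto_id hγ.ne'
    rw [div_self hγ.ne'] at this
    exact this.mono_left nhdsWithin_le_nhds
  -- limit of r ↦ log (E r - γ)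
  have hC : Tendsto (fun r : ℝ => Real.log (E * r - γ)) (nhdsWithin γ (Set.Ioi γ))
      (nhds (Real.log (E * γ - γ))) := by
    have hpos : (0:ℝ) < E * γ - γ := by nlinarith
    have : Tendsto (fun r : ℝ => E * r - γ) (nhds γ) (nhds (E * γ - γ)) := by
      exact Tendsto.sub (Tendsto.const_mul _ tendsto_id) tendsto_const_nhds
    exact ((Real.continuousAt_log hpos.ne').tendsto.comp this).mono_left nhdsWithin_le_nhds
  -- limit of r ↦ γ/(r*r)
  have hD : Tendsto (fun r : ℝ => γ / (r * r)) (nhdsWithin γ (Set.Ioi γ))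
      (nhds (γ / (γ * γ))) := by
    exact (Tendsto.div tendsto_const_nhds (Tendsto.mul tendsto_id tendsto_id)
      (by positivity)).mono_left nhdsWithin_le_nhds
  -- limit of r ↦ log(r-γ) * (r-γ)
  have hX : Tendsto (fun r : ℝ => Real.log (r - γ) * (r - γ))
      (nhdsWithin γ (Set.Ioi γ)) (nhds 0) := by
    have key : Tendsto (fun x : ℝ => Real.log x * x) (nhdsWithin 0 (Set.Ioi 0)) (nhds 0) := by
      have := tendsto_log_mul_rpow_nhdsGT_zero (r := 1) one_pos
      simpa using this
    have hsub : Tendsto (fun r : ℝ => r - γ) (nhdsWithin γ (Set.Ioi γ))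
        (nhdsWithin 0 (Set.Ioi 0)) := by
      apply tendsto_nhdsWithin_of_tendsto_nhds_of_eventually_within
      · have : Tendsto (fun r : ℝ => r - γ) (nhds γ) (nhds (γ - γ)) :=
          Tendsto.sub tendsto_id tendsto_const_nhds
        rw [sub_self] at this
        exact this.mono_left nhdsWithin_le_nhds
      · filter_upwards [self_mem_nhdsWithin] with r hr
        exact sub_pos.mpr (Set.mem_Ioi.mp hr)
    exact key.comp hsub
  -- limit of h is 0
  have hh : Tendsto h (nhdsWithin γ (Set.Ioi γ)) (nhds 0) := by
    have t1 : Tendsto (fun r : ℝ => (1 - γ / r) * (1 - E)) (nhdsWithin γ (Set.Ioi γ))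
        (nhds (0 * (1 - E))) := hA.mul tendsto_const_nhds
    have := (t1.sub ((hB.mul hA).mul hC)).add (hD.mul hX)
    simpa using this
  -- Dfun eventually equals the decomposed form
  have heq : ∀ᶠ r in nhdsWithin γ (Set.Ioi γ),
      Dfun γ ω r lam = (1 / lam ^ 2) * (Real.sinh (ω * lam) + Real.exp (-(ω * lam)) * h r) := by
    filter_upwards [self_mem_nhdsWithin] with r hr
    have hrγ : γ < r := hr
    have hr0 : (0:ℝ) < r := hγ.trans hrγ
    have h1 : (0:ℝ) < E * r - γ := by nlinarith
    have h2 : (0:ℝ) < r - γ := sub_pos.mpr hrγ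
    have hlog : Real.log ((E * r - γ) / (r - γ)) =
        Real.log (E * r - γ) - Real.log (r - γ) := Real.log_div h1.ne' h2.ne'
    rw [Dfun, ← hEdef, hlog, hhdef]
    field_simp
    ring
  -- conclude
  have hfinal : Tendsto (fun r => (1 / lam ^ 2) *
      (Real.sinh (ω * lam) + Real.exp (-(ω * lam)) * h r))
      (nhdsWithin γ (Set.Ioi γ)) (nhds (Real.sinh (ω * lam) / lam ^ 2)) := by
    have h0 : (1 / lam ^ 2) * (Real.sinh (ω * lam) + Real.exp (-(ω * lam)) * 0)
        = Real.sinh (ω * lam) / lam ^ 2 := by ring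
    have := Tendsto.const_mul (1 / lam ^ 2)
      (Tendsto.const_add (Real.sinh (ω * lam)) (Tendsto.const_mul (Real.exp (-(ω * lam))) hh))
    rwa [h0] at this
  exact hfinal.congr' (heq.mono fun r hr => hr.symm)
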